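/- In dimension N = 3, the matrix Q = [[1, -1, 0], [1, w_2/w_1, -1 - w_2/w_1], [w_1, w_2, w_3]] satisfies the admissibility conditions: it is invertible, its last row is w^T, Q𝟙 = (w_1+w_2+w_3)e_3, and all off-diagonal entries of Q·diag(x)·Q^{-1} are nonpositive, whenever 0 < x_1 ≤ x_2 ≤ x_3 and w_1, w_2, w_3 > 0. -/

import Mathlib

set_option maxHeartbeats 1000000 in
/-- In dimension `N = 3`, the matrix with rows `(1,-1,0)`, `(1, w₂/w₁, -1-w₂/w₁)`,
`(w₁,w₂,w₃)` is admissible whenever `0 < x₁ ≤ x₂ ≤ x₃` and `w₁,w₂,w₃ > 0`. -/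
theorem stmt_11 (w₁ w₂ w₃ x₁ x₂ x₃ : ℝ) (hw₁ : 0 < w₁) (hw₂ : 0 < w₂) (hw₃ : 0 < w₃)
    (hx₁ : 0 < x₁) (hx12 : x₁ ≤ x₂) (hx23 : x₂ ≤ x₃)
    (Q : Matrix (Fin 3) (Fin 3) ℝ)
    (hQ : Q = Matrix.of ![![1, -1, 0], ![1, w₂ / w₁, -1 - w₂ / w₁], ![w₁, w₂, w₃]]) :
    IsUnit Q ∧
      (∀ j, Q 2 j = ![w₁, w₂, w₃] j) ∧
      Q.mulVec (fun _ => (1 : ℝ)) = Pi.single (2 : Fin 3) (w₁ + w₂ + w₃) ∧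
      (∀ i j : Fin 3, i ≠ j →
        (Q * Matrix.diagonal ![x₁, x₂, x₃] * Q⁻¹) i j ≤ 0) := by
  have hp : (0:ℝ) < w₁ + w₂ := by linarith
  have hs : (0:ℝ) < w₁ + w₂ + w₃ := by linarith
  have hw₁' := hw₁.ne'
  have hp' := hp.ne'
  have hs' := hs.ne'
  set p := w₁ + w₂ with hpdef
  set s := w₁ + w₂ + w₃ with hsdef
  set R : Matrix (Fin 3) (Fin 3) ℝ :=
    Matrix.of ![![w₂/p, w₁*w₃/(p*s), 1/s],
                ![-w₁/p, w₁*w₃/(p*s), 1/s],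
                ![0, -w₁/s, 1/s]] with hR
  have hQR : Q * R = 1 := by
    subst hQ
    ext i j
    fin_cases i <;> fin_cases j <;>
      simp [hR, Matrix.mul_apply, Fin.sum_univ_three] <;>
      field_simp <;> ring_nf <;> simp only [hpdef, hsdef] <;> ring
  have hunit : IsUnit Q :=
    (Matrix.isUnit_iff_isUnit_det Q).mpr (Matrix.isUnit_det_of_right_inverse hQR)
  have hinv : Q⁻¹ = R := Matrix.inv_eq_right_inv hQR
  refine ⟨hunit, ?_, ?_, ?_⟩
  · intro j; fin_cases j <;> simp [hQ]
  · ext i; fin_cases i <;>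
      simp [hQ, Matrix.mulVec, dotProduct, Fin.sum_univ_three, Pi.single_apply] <;>
      rw [hsdef]
  · intro i j hij
    rw [hinv]
    have h12 : (0:ℝ) ≤ x₂ - x₁ := by linarith
    have h13 : (0:ℝ) ≤ x₃ - x₁ := by linarith
    have h23 : (0:ℝ) ≤ x₃ - x₂ := by linarith
    have hM : Q * Matrix.diagonal ![x₁, x₂, x₃] * R =
        Matrix.of ![![(x₁*w₂+x₂*w₁)/p, w₁*w₃*(x₁-x₂)/(p*s), (x₁-x₂)/s],
                    ![w₂*(x₁-x₂)/p, (w₃*(w₁*x₁+w₂*x₂)+p^2*x₃)/(p*s),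
                      (w₁*x₁+w₂*x₂-(w₁+w₂)*x₃)/(w₁*s)],
                    ![w₁*w₂*(x₁-x₂)/p, w₁*w₃*(w₁*x₁+w₂*x₂-(w₁+w₂)*x₃)/(p*s),
                      (w₁*x₁+w₂*x₂+w₃*x₃)/s]] := by
      subst hQ
      ext a b
      fin_cases a <;> fin_cases b <;>
        simp [hR, Matrix.mul_apply, Matrix.vecMul_diagonal, Matrix.diagonal_apply, Fin.sum_univ_three] <;> field_simp <;> ring
    rw [hM]
    fin_cases i <;> fin_cases j <;> simp only [Matrix.of_apply, Matrix.cons_val',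
      Matrix.cons_val_zero, Matrix.cons_val_one, Matrix.head_cons, Matrix.empty_val',
      Matrix.cons_val_fin_one, Matrix.head_fin_const] <;>
      first
      | exact absurd rfl hij
      | (apply div_nonpos_of_nonpos_of_nonneg
         · nlinarith [mul_nonneg (mul_pos hw₁ hw₃).le h12, mul_nonneg hw₂.le h12,
             mul_nonneg (mul_pos hw₁ hw₂).le h12, mul_nonneg hw₁.le h13,
             mul_nonneg hw₂.le h23,
             mul_nonneg (mul_pos hw₁ hw₃).le (mul_nonneg hw₁.le h13),
             mul_nonneg (mul_pos hw₁ hw₃).le (mul_nonneg hw₂.le h23)]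
         · positivity)
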